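/- Let (V, ω) be a 2n-dimensional symplectic vector space and C ⊂ V a subspace of dimension n + k. Then C is coisotropic (i.e., C^ω ⊆ C) if and only if the restriction of the (k+1)-fold wedge power ω^{k+1} to C vanishes. -/

import Mathlib

open Module Finset

namespace Stmt11

variable {V : Type*} [AddCommGroup V] [Module ℝ V]

variable (k : ℕ)

def ev (i : Fin (k + 1)) : Fin (2 * k + 2) := ⟨2 * i.1, by have := i.2; omega⟩
def od (i : Fin (k + 1)) : Fin (2 * k + 2) := ⟨2 * i.1 + 1, by have := i.2; omega⟩

variable {k}

lemma ev_ne_od (i j : Fin (k+1)) : ev k i ≠ od k j := by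
  simp only [ev, od, Ne, Fin.mk.injEq]; omega

lemma ev_inj {i j : Fin (k+1)} (h : ev k i = ev k j) : i = j := by
  have := congrArg Fin.val h
  simp only [ev] at this
  exact Fin.ext (by omega)

/-- The product multilinear map `v ↦ ∏ ω (v (2i)) (v (2i+1))`. -/
def P (ω : V →ₗ[ℝ] V →ₗ[ℝ] ℝ) (k : ℕ) : MultilinearMap ℝ (fun _ : Fin (2 * k + 2) => V) ℝ where
  toFun v := ∏ i : Fin (k + 1), ω (v (ev k i)) (v (od k i))
  map_update_add' := by
    intro _ v j x y
    have hj2 : j.1 / 2 < k + 1 := by have := j.2; omega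
    set i₀ : Fin (k + 1) := ⟨j.1 / 2, hj2⟩ with hi₀
    have hcompl : ∀ z : V, ∀ i ∈ ({i₀}ᶜ : Finset (Fin (k+1))),
        ω (Function.update v j z (ev k i)) (Function.update v j z (od k i))
          = ω (v (ev k i)) (v (od k i)) := by
      intro z i hi
      have hi' : i ≠ i₀ := by simpa using hi
      have h1 : ev k i ≠ j := by
        simp only [ev, Ne, Fin.ext_iff]; intro h; apply hi'; apply Fin.ext; simp [hi₀]; omega
      have h2 : od k i ≠ j := by
        simp only [od, Ne, Fin.ext_iff]; intro h; apply hi'; apply Fin.ext; simp [hi₀]; omega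
      rw [Function.update_of_ne h1, Function.update_of_ne h2]
    have hcase : j = ev k i₀ ∨ j = od k i₀ := by
      rcases Nat.even_or_odd j.1 with h | h
      · left; apply Fin.ext; obtain ⟨c, hc⟩ := h; simp [ev, hi₀]; omega
      · right; apply Fin.ext; obtain ⟨c, hc⟩ := h; simp [od, hi₀]; omega
    rw [Fintype.prod_eq_mul_prod_compl i₀, Fintype.prod_eq_mul_prod_compl i₀,
      Fintype.prod_eq_mul_prod_compl i₀, Finset.prod_congr rfl (hcompl (x + y)),
      Finset.prod_congr rfl (hcompl x), Finset.prod_congr rfl (hcompl y), ← add_mul]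
    congr 1
    rcases hcase with h | h
    · have hne : od k i₀ ≠ j := fun hh => ev_ne_od i₀ i₀ (h ▸ hh.symm)
      have e1 : ∀ z : V, Function.update v j z (ev k i₀) = z := fun z => by
        rw [← h, Function.update_self]
      have e2 : ∀ z : V, Function.update v j z (od k i₀) = v (od k i₀) := fun z => by
        rw [Function.update_of_ne hne]
      rw [e1, e1, e1, e2, e2, e2]; simp
    · have hne : ev k i₀ ≠ j := fun hh => ev_ne_od i₀ i₀ (hh.trans h)
      have e1 : ∀ z : V, Function.update v j z (od k i₀) = z := fun z => by
        rw [← h, Function.update_self]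
      have e2 : ∀ z : V, Function.update v j z (ev k i₀) = v (ev k i₀) := fun z => by
        rw [Function.update_of_ne hne]
      rw [e1, e1, e1, e2, e2, e2]; simp
  map_update_smul' := by
    intro _ v j c x
    have hj2 : j.1 / 2 < k + 1 := by have := j.2; omega
    set i₀ : Fin (k + 1) := ⟨j.1 / 2, hj2⟩ with hi₀
    have hcompl : ∀ z : V, ∀ i ∈ ({i₀}ᶜ : Finset (Fin (k+1))),
        ω (Function.update v j z (ev k i)) (Function.update v j z (od k i))
          = ω (v (ev k i)) (v (od k i)) := by
      intro z i hi
      have hi' : i ≠ i₀ := by simpa using hi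
      have h1 : ev k i ≠ j := by
        simp only [ev, Ne, Fin.ext_iff]; intro h; apply hi'; apply Fin.ext; simp [hi₀]; omega
      have h2 : od k i ≠ j := by
        simp only [od, Ne, Fin.ext_iff]; intro h; apply hi'; apply Fin.ext; simp [hi₀]; omega
      rw [Function.update_of_ne h1, Function.update_of_ne h2]
    have hcase : j = ev k i₀ ∨ j = od k i₀ := by
      rcases Nat.even_or_odd j.1 with h | h
      · left; apply Fin.ext; obtain ⟨c, hc⟩ := h; simp [ev, hi₀]; omega
      · right; apply Fin.ext; obtain ⟨c, hc⟩ := h; simp [od, hi₀]; omega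
    rw [Fintype.prod_eq_mul_prod_compl i₀, Fintype.prod_eq_mul_prod_compl i₀,
      Finset.prod_congr rfl (hcompl (c • x)), Finset.prod_congr rfl (hcompl x), smul_eq_mul,
      ← mul_assoc]
    congr 1
    rcases hcase with h | h
    · have hne : od k i₀ ≠ j := fun hh => ev_ne_od i₀ i₀ (h ▸ hh.symm)
      have e1 : ∀ z : V, Function.update v j z (ev k i₀) = z := fun z => by
        rw [← h, Function.update_self]
      have e2 : ∀ z : V, Function.update v j z (od k i₀) = v (od k i₀) := fun z => by
        rw [Function.update_of_ne hne]
      rw [e1, e1, e2, e2]; simp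
    · have hne : ev k i₀ ≠ j := fun hh => ev_ne_od i₀ i₀ (hh.trans h)
      have e1 : ∀ z : V, Function.update v j z (od k i₀) = z := fun z => by
        rw [← h, Function.update_self]
      have e2 : ∀ z : V, Function.update v j z (ev k i₀) = v (ev k i₀) := fun z => by
        rw [Function.update_of_ne hne]
      rw [e1, e1, e2, e2]; simp

/-- The alternatization. -/
noncomputable def A (ω : V →ₗ[ℝ] V →ₗ[ℝ] ℝ) (k : ℕ) : V [⋀^Fin (2 * k + 2)]→ₗ[ℝ] ℝ :=
  MultilinearMap.alternatization (P ω k)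

lemma A_apply (ω : V →ₗ[ℝ] V →ₗ[ℝ] ℝ) (k : ℕ) (v : Fin (2 * k + 2) → V) :
    A ω k v = ∑ σ : Equiv.Perm (Fin (2 * k + 2)),
      ((Equiv.Perm.sign σ : ℤ) : ℝ) *
        ∏ i : Fin (k + 1), ω (v (σ (ev k i))) (v (σ (od k i))) := by
  rw [A, MultilinearMap.alternatization_apply]
  refine Finset.sum_congr rfl fun σ _ => ?_
  rw [MultilinearMap.domDomCongr_apply]
  show Equiv.Perm.sign σ • (P ω k) (v ∘ σ) = _
  rw [Units.smul_def, zsmul_eq_mul]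
  rfl


lemma skew {ω : V →ₗ[ℝ] V →ₗ[ℝ] ℝ} (halt : ∀ v, ω v v = 0) (a b : V) :
    ω a b = -ω b a := by
  have h := halt (a + b)
  simp only [map_add, LinearMap.add_apply, halt a, halt b] at h
  linarith

lemma A_eq_zero_of_orth (ω : V →ₗ[ℝ] V →ₗ[ℝ] ℝ) (k : ℕ) (v : Fin (2 * k + 2) → V)
    (j : Fin (2 * k + 2)) (h1 : ∀ i, ω (v j) (v i) = 0) (h2 : ∀ i, ω (v i) (v j) = 0) :
    A ω k v = 0 := by
  rw [A_apply]
  refine Finset.sum_eq_zero fun σ _ => ?_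
  set l : Fin (2 * k + 2) := σ.symm j with hl
  have hl2 : l.1 / 2 < k + 1 := by have := l.2; omega
  set i₀ : Fin (k + 1) := ⟨l.1 / 2, hl2⟩ with hi₀
  have hcase : ev k i₀ = l ∨ od k i₀ = l := by
    rcases Nat.even_or_odd l.1 with h | h
    · left; apply Fin.ext; obtain ⟨c, hc⟩ := h; simp [ev, hi₀]; omega
    · right; apply Fin.ext; obtain ⟨c, hc⟩ := h; simp [od, hi₀]; omega
  have hzero : ω (v (σ (ev k i₀))) (v (σ (od k i₀))) = 0 := by
    rcases hcase with h | h
    · rw [h, hl, Equiv.apply_symm_apply]; exact h1 _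
    · rw [h, hl, Equiv.apply_symm_apply]; exact h2 _
  rw [Finset.prod_eq_zero (Finset.mem_univ i₀) hzero, mul_zero]


open LinearMap in
lemma A_eq_zero_of_small (ω : V →ₗ[ℝ] V →ₗ[ℝ] ℝ) (halt : ∀ v, ω v v = 0) (k : ℕ)
    [FiniteDimensional ℝ V] (C : Submodule ℝ V)
    (hfr : finrank ℝ C < finrank ℝ (C ⊓ BilinForm.orthogonal ω C : Submodule ℝ V) + (2 * k + 2))
    (v : Fin (2 * k + 2) → V) (hv : ∀ i, v i ∈ C) : A ω k v = 0 := by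
  classical
  set R : Submodule ℝ V := C ⊓ BilinForm.orthogonal ω C with hR
  have hRC : R ≤ C := inf_le_left
  set R' : Submodule ℝ C := R.comap C.subtype with hR'
  have hfinR' : finrank ℝ R' = finrank ℝ R :=
    (Submodule.comapSubtypeEquivOfLe hRC).finrank_eq
  have hQ : finrank ℝ (C ⧸ R') + finrank ℝ R' = finrank ℝ C :=
    Submodule.finrank_quotient_add_finrank R'
  have hQlt : finrank ℝ (C ⧸ R') < 2 * k + 2 := by omega
  set vc : Fin (2 * k + 2) → C := fun i => ⟨v i, hv i⟩ with hvc
  set vq : Fin (2 * k + 2) → C ⧸ R' := fun i => R'.mkQ (vc i) with hvq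
  have hdep : ¬ LinearIndependent ℝ vq := fun h => by
    have := h.fintype_card_le_finrank
    rw [Fintype.card_fin] at this
    omega
  obtain ⟨g, hg, j, hgj⟩ := Fintype.not_linearIndependent_iff.mp hdep
  have hmem : (∑ i, g i • vc i : C) ∈ R' := by
    have h0 : R'.mkQ (∑ i, g i • vc i) = 0 := by
      rw [map_sum]
      simpa only [map_smul] using hg
    rwa [← LinearMap.mem_ker, Submodule.ker_mkQ] at h0
  set r : V := ∑ i, g i • v i with hr
  have hcoe : ((∑ i, g i • vc i : C) : V) = r := by
    simp [hr, hvc]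
  have hrR : r ∈ R := by
    have := hmem
    rw [Submodule.mem_comap] at this
    rwa [show C.subtype (∑ i, g i • vc i) = r from hcoe] at this
  have hrC : r ∈ C := hRC hrR
  have hrorth : ∀ c ∈ C, ω c r = 0 := fun c hc => hrR.2 c hc
  have hAup : A ω k (Function.update v j r) = 0 := by
    have hupC : ∀ i, Function.update v j r i ∈ C := by
      intro i
      rcases eq_or_ne i j with h | h
      · rw [h, Function.update_self]; exact hrC
      · rw [Function.update_of_ne h]; exact hv i
    refine A_eq_zero_of_orth ω k _ j (fun i => ?_) (fun i => ?_)
    · rw [Function.update_self, skew halt, hrorth _ (hupC i)]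
      ring
    · rw [Function.update_self]
      exact hrorth _ (hupC i)
  have hexp : A ω k (Function.update v j r) = ∑ i, g i • A ω k (Function.update v j (v i)) := by
    rw [hr, (A ω k).map_update_sum]
    exact Finset.sum_congr rfl fun i _ => by rw [(A ω k).map_update_smul]
  have hterm : ∀ i, i ≠ j → A ω k (Function.update v j (v i)) = 0 := by
    intro i hij
    refine (A ω k).map_eq_zero_of_eq _ (i := j) (j := i) ?_ (Ne.symm hij)
    rw [Function.update_self, Function.update_of_ne hij]
  have hsum : ∑ i, g i • A ω k (Function.update v j (v i)) = g j • A ω k v := by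
    rw [Finset.sum_eq_single j]
    · rw [Function.update_eq_self]
    · intro i _ hij
      rw [hterm i hij, smul_eq_mul, mul_zero]
    · intro h; exact absurd (Finset.mem_univ j) h
  have : g j • A ω k v = 0 := by rw [← hsum, ← hexp, hAup]
  rcases smul_eq_zero.mp this with h | h
  · exact absurd h hgj
  · exact h


open LinearMap in
lemma extract (ω : V →ₗ[ℝ] V →ₗ[ℝ] ℝ) (halt : ∀ v, ω v v = 0) [FiniteDimensional ℝ V] :
    ∀ (m : ℕ) (D : Submodule ℝ V),
      2 * m + finrank ℝ (D ⊓ BilinForm.orthogonal ω D : Submodule ℝ V) ≤ finrank ℝ D + 1 →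
      ∃ e f : Fin m → V, (∀ i, e i ∈ D) ∧ (∀ i, f i ∈ D) ∧
        (∀ i j, ω (e i) (e j) = 0) ∧ (∀ i j, ω (f i) (f j) = 0) ∧
        (∀ i j, ω (e i) (f j) = if i = j then 1 else 0) := by
  intro m
  induction m with
  | zero =>
    intro D _
    exact ⟨Fin.elim0, Fin.elim0, fun i => i.elim0, fun i => i.elim0, fun i => i.elim0,
      fun i => i.elim0, fun i => i.elim0⟩
  | succ m ih =>
    intro D hle
    have hlt : finrank ℝ (D ⊓ BilinForm.orthogonal ω D : Submodule ℝ V) < finrank ℝ D := by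
      omega
    have hne : ¬ (D ≤ BilinForm.orthogonal ω D) := by
      intro h
      rw [inf_eq_left.mpr h] at hlt
      exact lt_irrefl _ hlt
    obtain ⟨x, hxD, hxo⟩ := SetLike.not_le_iff_exists.mp hne
    have : ∃ a ∈ D, ω a x ≠ 0 := by
      by_contra hcon
      push_neg at hcon
      exact hxo (fun n hn => hcon n hn)
    obtain ⟨a, haD, hax⟩ := this
    set b : V := (ω a x)⁻¹ • x with hb
    have hbD : b ∈ D := D.smul_mem _ hxD
    have hab : ω a b = 1 := by
      rw [hb, map_smul, smul_eq_mul, inv_mul_cancel₀ hax]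
    have hba : ω b a = -1 := by rw [skew halt, hab]
    set D' : Submodule ℝ V := D ⊓ LinearMap.ker (ω a) ⊓ LinearMap.ker (ω b) with hD'
    have hD'le : D' ≤ D := le_trans inf_le_left inf_le_left
    have hD'mem : ∀ y, y ∈ D' ↔ y ∈ D ∧ ω a y = 0 ∧ ω b y = 0 := by
      intro y
      simp [hD', Submodule.mem_inf, LinearMap.mem_ker, and_assoc]
    set p : V → V := fun d => d + (ω b d) • a - (ω a d) • b with hp
    have hpD' : ∀ d ∈ D, p d ∈ D' := by
      intro d hd
      rw [hD'mem]
      refine ⟨D.sub_mem (D.add_mem hd (D.smul_mem _ haD)) (D.smul_mem _ hbD), ?_, ?_⟩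
      · simp only [hp, map_add, map_sub, map_smul, smul_eq_mul, halt a, hab]
        ring
      · simp only [hp, map_add, map_sub, map_smul, smul_eq_mul, halt b, hba]
        ring
    have hdecomp : ∀ d : V, d = p d - (ω b d) • a + (ω a d) • b := by
      intro d; simp only [hp]; module
    have hsup : D = D' ⊔ Submodule.span ℝ {a, b} := by
      apply le_antisymm
      · intro d hd
        rw [hdecomp d]
        refine Submodule.add_mem _ (Submodule.sub_mem _
          (Submodule.mem_sup_left (hpD' d hd)) (Submodule.mem_sup_right ?_)) 
          (Submodule.mem_sup_right ?_)
        · exact Submodule.smul_mem _ _ (Submodule.subset_span (by simp))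
        · exact Submodule.smul_mem _ _ (Submodule.subset_span (by simp))
      · refine sup_le hD'le ?_
        rw [Submodule.span_le]
        intro y hy
        rcases hy with h | h
        · simpa [h] using haD
        · simp only [Set.mem_singleton_iff] at h
          simpa [h] using hbD
    have hdisj : D' ⊓ Submodule.span ℝ {a, b} = ⊥ := by
      rw [eq_bot_iff]
      intro y hy
      obtain ⟨hy1, hy2⟩ := Submodule.mem_inf.mp hy
      rw [Submodule.mem_span_pair] at hy2
      obtain ⟨s, t, hst⟩ := hy2
      rw [hD'mem] at hy1
      have h1 : ω a y = 0 := hy1.2.1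
      have h2 : ω b y = 0 := hy1.2.2
      rw [← hst] at h1 h2
      simp only [map_add, map_smul, smul_eq_mul, halt a, halt b, hab, hba, mul_zero,
        mul_one, zero_add, add_zero, mul_neg, mul_neg_one] at h1 h2
      have ht : t = 0 := h1
      have hs : s = 0 := neg_eq_zero.mp h2
      simp only [Submodule.mem_bot]
      rw [← hst, ht, hs, zero_smul, zero_smul, add_zero]
    have hindep : LinearIndependent ℝ ![a, b] := by
      rw [LinearIndependent.pair_iff]
      intro s t hst
      have h1 := congrArg (ω a) hst
      have h2 := congrArg (ω b) hst
      simp only [map_add, map_smul, smul_eq_mul, halt a, halt b, hab, hba, map_zero, mul_zero,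
        mul_one, zero_add, add_zero, mul_neg, mul_neg_one] at h1 h2
      exact ⟨neg_eq_zero.mp h2, h1⟩
    have hspan2 : finrank ℝ (Submodule.span ℝ {a, b} : Submodule ℝ V) = 2 := by
      have hr : Set.range ![a, b] = {a, b} := by
        simp only [Matrix.range_cons, Matrix.range_empty, Set.union_empty,
          Set.union_singleton]
        exact Set.pair_comm b a
      have := finrank_span_eq_card hindep
      rw [hr] at this
      rw [this, Fintype.card_fin]
    have hdim : finrank ℝ D = finrank ℝ D' + 2 := by
      have h := Submodule.finrank_sup_add_finrank_inf_eq D' (Submodule.span ℝ {a, b})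
      rw [← hsup, hdisj, finrank_bot, add_zero, hspan2] at h
      exact h
    have hrad : (D ⊓ BilinForm.orthogonal ω D : Submodule ℝ V)
        = D' ⊓ BilinForm.orthogonal ω D' := by
      apply le_antisymm
      · intro r hr
        obtain ⟨hr1, hr2⟩ := Submodule.mem_inf.mp hr
        have hor : ∀ n ∈ D, ω n r = 0 := fun n hn => hr2 n hn
        refine Submodule.mem_inf.mpr ⟨?_, ?_⟩
        · rw [hD'mem]
          exact ⟨hr1, hor a haD, hor b hbD⟩
        · intro n hn
          exact hor n (hD'le hn)
      · intro r hr
        obtain ⟨hr1, hr2⟩ := Submodule.mem_inf.mp hr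
        have hrD' : r ∈ D ∧ ω a r = 0 ∧ ω b r = 0 := (hD'mem r).mp hr1
        refine Submodule.mem_inf.mpr ⟨hrD'.1, ?_⟩
        intro n hn
        have hn' : ω (p n) r = 0 := hr2 _ (hpD' n hn)
        have ha0 : ω a r = 0 := hrD'.2.1
        have hb0 : ω b r = 0 := hrD'.2.2
        have hne2 : ω n r = ω (p n - (ω b n) • a + (ω a n) • b) r := by rw [← hdecomp n]
        show ω n r = 0
        rw [hne2]
        simp only [map_add, map_sub, map_smul, LinearMap.add_apply, LinearMap.sub_apply,
          LinearMap.smul_apply, smul_eq_mul, hn', ha0, hb0, mul_zero, sub_zero, add_zero,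
          zero_add]
    have hle' : 2 * m + finrank ℝ (D' ⊓ BilinForm.orthogonal ω D' : Submodule ℝ V)
        ≤ finrank ℝ D' + 1 := by
      rw [← hrad]; omega
    obtain ⟨e', f', he'D, hf'D, hee, hff, hef⟩ := ih D' hle'
    have hkera : ∀ y ∈ D', ω a y = 0 := fun y hy => ((hD'mem y).mp hy).2.1
    have hkerb : ∀ y ∈ D', ω b y = 0 := fun y hy => ((hD'mem y).mp hy).2.2
    refine ⟨Fin.cons a e', Fin.cons b f', ?_, ?_, ?_, ?_, ?_⟩
    · intro i
      refine Fin.cases ?_ (fun i => ?_) i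
      · simpa using haD
      · simpa using hD'le (he'D i)
    · intro i
      refine Fin.cases ?_ (fun i => ?_) i
      · simpa using hbD
      · simpa using hD'le (hf'D i)
    · intro i j
      refine Fin.cases ?_ (fun i => ?_) i <;> refine Fin.cases ?_ (fun j => ?_) j
      · simpa using halt a
      · simpa using hkera _ (he'D j)
      · simp only [Fin.cons_succ, Fin.cons_zero]
        rw [skew halt, hkera _ (he'D i)]; ring
      · simpa using hee i j
    · intro i j
      refine Fin.cases ?_ (fun i => ?_) i <;> refine Fin.cases ?_ (fun j => ?_) j
      · simpa using halt b
      · simpa using hkerb _ (hf'D j)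
      · simp only [Fin.cons_succ, Fin.cons_zero]
        rw [skew halt, hkerb _ (hf'D i)]; ring
      · simpa using hff i j
    · intro i j
      refine Fin.cases ?_ (fun i => ?_) i <;> refine Fin.cases ?_ (fun j => ?_) j
      · simpa using hab
      · simp only [Fin.cons_succ, Fin.cons_zero]
        rw [hkera _ (hf'D j)]
        simp [(Fin.succ_ne_zero j).symm]
      · simp only [Fin.cons_succ, Fin.cons_zero]
        rw [skew halt, hkerb _ (he'D i)]
        simp [Fin.succ_ne_zero i]
      · simp only [Fin.cons_succ]
        rw [hef i j]
        simp [Fin.succ_inj]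


lemma prod_if_pow {M : Type*} [CommMonoid M] {n : ℕ} (c : M) (b : Fin n → Bool) :
    ∏ i, (if b i = true then c else 1)
      = c ^ (Finset.univ.filter (fun i => b i = true)).card := by
  classical
  rw [← Finset.prod_filter_mul_prod_filter_not Finset.univ (fun i => b i = true)]
  rw [Finset.prod_congr rfl (fun i hi => if_pos (Finset.mem_filter.mp hi).2),
      Finset.prod_congr rfl (fun i hi => if_neg (Finset.mem_filter.mp hi).2),
      Finset.prod_const, Finset.prod_const, one_pow, mul_one]

lemma A_pos (ω : V →ₗ[ℝ] V →ₗ[ℝ] ℝ) (k : ℕ) (v : Fin (2 * k + 2) → V)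
    (hM : ∀ a b : Fin (2 * k + 2), ω (v a) (v b) =
      if a.1 / 2 = b.1 / 2 then
        (if a.1 % 2 = 0 ∧ b.1 % 2 = 1 then (1 : ℝ)
          else if a.1 % 2 = 1 ∧ b.1 % 2 = 0 then -1 else 0)
      else 0) :
    0 < A ω k v := by
  classical
  rw [A_apply]
  apply Finset.sum_pos'
  · intro σ _
    by_cases hz : ∃ i : Fin (k + 1), ω (v (σ (ev k i))) (v (σ (od k i))) = 0
    · obtain ⟨i, h⟩ := hz
      rw [Finset.prod_eq_zero (Finset.mem_univ i) h, mul_zero]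
    · push_neg at hz
      have hblk : ∀ i : Fin (k + 1), (σ (ev k i)).1 / 2 = (σ (od k i)).1 / 2 := by
        intro i
        by_contra hc
        exact hz i (by rw [hM, if_neg hc])
      have hpar : ∀ i : Fin (k + 1),
          ((σ (ev k i)).1 % 2 = 0 ∧ (σ (od k i)).1 % 2 = 1) ∨
          ((σ (ev k i)).1 % 2 = 1 ∧ (σ (od k i)).1 % 2 = 0) := by
        intro i
        by_contra hc
        have hc1 : ¬ ((σ (ev k i)).1 % 2 = 0 ∧ (σ (od k i)).1 % 2 = 1) :=
          fun h => hc (Or.inl h)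
        have hc2 : ¬ ((σ (ev k i)).1 % 2 = 1 ∧ (σ (od k i)).1 % 2 = 0) :=
          fun h => hc (Or.inr h)
        have h := hz i
        rw [hM, if_pos (hblk i), if_neg hc1, if_neg hc2] at h
        exact h rfl
      -- the block map
      have hπlt : ∀ i : Fin (k + 1), (σ (ev k i)).1 / 2 < k + 1 := by
        intro i; have := (σ (ev k i)).2; omega
      set π : Fin (k + 1) → Fin (k + 1) := fun i => ⟨(σ (ev k i)).1 / 2, hπlt i⟩ with hπ
      have hπinj : Function.Injective π := by
        intro i i' h
        by_contra hne
        have d1 : (σ (ev k i)).1 ≠ (σ (od k i)).1 :=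
          fun hh => ev_ne_od i i (σ.injective (Fin.val_injective hh))
        have d2 : (σ (ev k i)).1 ≠ (σ (ev k i')).1 :=
          fun hh => hne (ev_inj (σ.injective (Fin.val_injective hh)))
        have d3 : (σ (od k i)).1 ≠ (σ (ev k i')).1 :=
          fun hh => (ev_ne_od i' i) (σ.injective (Fin.val_injective hh)).symm
        have e1 : (σ (ev k i)).1 / 2 = (σ (od k i)).1 / 2 := hblk i
        have e2 : (σ (ev k i)).1 / 2 = (σ (ev k i')).1 / 2 := by
          have := congrArg Fin.val h
          simpa [hπ] using this
        omega
      have hπbij : Function.Bijective π := Finite.injective_iff_bijective.mp hπinj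
      set πE : Equiv.Perm (Fin (k + 1)) := Equiv.ofBijective π hπbij with hπE
      set bb : Fin (k + 1) → Bool := fun i => decide ((σ (ev k i)).1 % 2 = 1) with hbb
      have hval : ∀ i : Fin (k + 1), ω (v (σ (ev k i))) (v (σ (od k i))) =
          if bb i = true then (-1 : ℝ) else 1 := by
        intro i
        rw [hM, if_pos (hblk i)]
        have hb2 : (bb i = true) ↔ (σ (ev k i)).1 % 2 = 1 := by simp [hbb]
        rcases hpar i with ⟨h1, h2⟩ | ⟨h1, h2⟩
        · rw [if_pos ⟨h1, h2⟩, if_neg (by rw [hb2]; omega)]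
        · rw [if_neg (by omega), if_pos ⟨h1, h2⟩, if_pos (hb2.mpr h1)]
      set s : Fin (k + 1) → Equiv.Perm (Fin 2) :=
        fun i => if bb i then Equiv.swap 0 1 else Equiv.refl _ with hs
      set E : Fin (k + 1) × Fin 2 ≃ Fin (2 * k + 2) :=
        finProdFinEquiv.trans (finCongr (by ring)) with hE
      have hEval : ∀ (i : Fin (k + 1)) (t : Fin 2), (E (i, t)).1 = t.1 + 2 * i.1 :=
        fun i t => rfl
      set τ : Equiv.Perm (Fin (k + 1) × Fin 2) :=
        (πE.prodCongr (Equiv.refl (Fin 2))) * (Equiv.prodCongrRight s) with hτ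
      have hτval : ∀ (i : Fin (k + 1)) (t : Fin 2), τ (i, t) = (πE i, s i t) := by
        intro i t
        rfl
      have hconj : ∀ (i : Fin (k + 1)) (t : Fin 2), σ (E (i, t)) = E (τ (i, t)) := by
        intro i t
        rw [hτval]
        apply Fin.val_injective
        rw [hEval]
        have hπval : (πE i : Fin (k+1)).1 = (σ (ev k i)).1 / 2 := rfl
        have htc : t = 0 ∨ t = 1 := by
          rcases t with ⟨(_ | _ | tv), htv⟩
          · left; rfl
          · right; rfl
          · omega
        rcases htc with rfl | rfl
        · -- t = 0 : E (i,0) = ev k i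
          have hev : E (i, 0) = ev k i := Fin.val_injective (by rw [hEval]; simp [ev])
          rw [hev]
          have hsv : (s i (0 : Fin 2)).1 = if bb i then 1 else 0 := by
            rw [hs]
            by_cases hbi : bb i
            · simp [hbi]
            · simp [hbi]
          rw [hπval, hsv]
          have hb2 : (bb i = true) ↔ (σ (ev k i)).1 % 2 = 1 := by simp [hbb]
          by_cases hbi : bb i
          · rw [if_pos hbi]
            have := hb2.mp hbi
            omega
          · rw [if_neg hbi]
            have : ¬ ((σ (ev k i)).1 % 2 = 1) := fun hh => hbi (hb2.mpr hh)
            omega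
        · -- t = 1 : E (i,1) = od k i
          have hod : E (i, 1) = od k i := Fin.val_injective (by rw [hEval]; simp [od]; omega)
          rw [hod]
          have hsv : (s i (1 : Fin 2)).1 = if bb i then 0 else 1 := by
            rw [hs]
            by_cases hbi : bb i
            · simp [hbi]
            · simp [hbi]
          rw [hπval, hsv]
          have hb2 : (bb i = true) ↔ (σ (ev k i)).1 % 2 = 1 := by simp [hbb]
          have hbd := hblk i
          by_cases hbi : bb i
          · rw [if_pos hbi]
            have h1 := hb2.mp hbi
            rcases hpar i with ⟨h2, h3⟩ | ⟨h2, h3⟩ <;> omega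
          · rw [if_neg hbi]
            have h1 : ¬ ((σ (ev k i)).1 % 2 = 1) := fun hh => hbi (hb2.mpr hh)
            rcases hpar i with ⟨h2, h3⟩ | ⟨h2, h3⟩ <;> omega
      have hdec : σ = E.permCongr τ := by
        refine Equiv.ext fun x => ?_
        rw [Equiv.permCongr_apply]
        have hx : E ((E.symm x).1, (E.symm x).2) = x := by simp
        conv_lhs => rw [← hx]
        rw [hconj]
      set N : ℕ := (Finset.univ.filter (fun i => bb i = true)).card with hN
      have hsign : Equiv.Perm.sign σ = (-1) ^ N := by
        rw [hdec, Equiv.Perm.sign_permCongr, hτ, map_mul]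
        have h1 : Equiv.Perm.sign (πE.prodCongr (Equiv.refl (Fin 2))) = 1 := by
          rw [Equiv.prodCongr_refl_right, Equiv.Perm.sign_prodCongrLeft]
          rw [Finset.prod_const, Finset.card_univ, Fintype.card_fin]
          exact Int.units_sq _
        have h2 : Equiv.Perm.sign (Equiv.prodCongrRight s) = (-1) ^ N := by
          rw [Equiv.Perm.sign_prodCongrRight]
          have : ∀ i, Equiv.Perm.sign (s i) = if bb i then (-1 : ℤˣ) else 1 := by
            intro i
            rw [hs]
            by_cases hbi : bb i
            · simp only [hbi, if_true]
              exact Equiv.Perm.sign_swap (by decide)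
            · simp [hbi]
          rw [Finset.prod_congr rfl (fun i _ => this i), prod_if_pow, hN]
        rw [h1, h2, one_mul]
      have hprodval : ∏ i : Fin (k + 1), ω (v (σ (ev k i))) (v (σ (od k i)))
          = (-1 : ℝ) ^ N := by
        rw [Finset.prod_congr rfl (fun i _ => hval i), prod_if_pow, hN]
      have hsign' : ((Equiv.Perm.sign σ : ℤ) : ℝ) = (-1 : ℝ) ^ N := by
        rw [hsign]
        push_cast
        ring
      rw [hprodval, hsign']
      exact mul_self_nonneg _
  · refine ⟨1, Finset.mem_univ 1, ?_⟩
    have hone : ∀ i : Fin (k + 1),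
        ω (v ((1 : Equiv.Perm (Fin (2 * k + 2))) (ev k i)))
          (v ((1 : Equiv.Perm (Fin (2 * k + 2))) (od k i))) = 1 := by
      intro i
      simp only [Equiv.Perm.one_apply]
      rw [hM]
      have h1 : (ev k i).1 / 2 = (od k i).1 / 2 := by simp [ev, od]; omega
      have h2 : (ev k i).1 % 2 = 0 ∧ (od k i).1 % 2 = 1 := by
        constructor <;> simp [ev, od] <;> omega
      rw [if_pos h1, if_pos h2]
    rw [Finset.prod_congr rfl (fun i _ => hone i), Finset.prod_const_one, mul_one, map_one]
    norm_num

end Stmt11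

open Module in
/-- Let `(V, ω)` be a symplectic vector space of dimension `2n`
(`ω` alternating and nondegenerate) and `C ⊆ V` a subspace of dimension `n + k`.
Then `C` is coisotropic (`C^ω ⊆ C`) iff the restriction to `C` of the `(k+1)`-fold
wedge power `ω^{k+1}` vanishes; the wedge power is expressed (up to the nonzero
combinatorial factor `2^{k+1}(k+1)!`) by the alternating sum
`Σ_σ sign(σ) Π_i ω(v_{σ(2i)}, v_{σ(2i+1)})` over permutations of the `2k+2` arguments. -/
theorem stmt_11 (V : Type*) [AddCommGroup V] [Module ℝ V] [FiniteDimensional ℝ V]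
    (n k : ℕ) (hkn : k ≤ n)
    (hdim : Module.finrank ℝ V = 2 * n)
    (ω : V →ₗ[ℝ] V →ₗ[ℝ] ℝ)
    (halt : ∀ v, ω v v = 0)
    (hnd : ∀ v, (∀ w, ω v w = 0) → v = 0)
    (C : Submodule ℝ V) (hC : Module.finrank ℝ C = n + k) :
    (∀ v : V, (∀ c ∈ C, ω v c = 0) → v ∈ C) ↔
      (∀ v : Fin (2 * k + 2) → V, (∀ i, v i ∈ C) →
        ∑ σ : Equiv.Perm (Fin (2 * k + 2)),
          ((Equiv.Perm.sign σ : ℤ) : ℝ) *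
            ∏ i : Fin (k + 1),
              ω (v (σ ⟨2 * i.1, by have := i.2; omega⟩))
                (v (σ ⟨2 * i.1 + 1, by have := i.2; omega⟩)) = 0) := by
  classical
  have hskew : ∀ a b : V, ω a b = -ω b a := Stmt11.skew halt
  have hrefl : (ω : LinearMap.BilinForm ℝ V).IsRefl := by
    intro x y h
    rw [hskew y x, h, neg_zero]
  have hndg : LinearMap.BilinForm.Nondegenerate (ω : LinearMap.BilinForm ℝ V) :=
    (LinearMap.IsRefl.nondegenerate_iff_separatingLeft hrefl).mpr fun m hm => hnd m hm
  have horthrank : finrank ℝ (LinearMap.BilinForm.orthogonal ω C : Submodule ℝ V)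
      = 2 * n - (n + k) := by
    rw [LinearMap.BilinForm.finrank_orthogonal hndg, hdim, hC]
  have hbridge : ∀ v : Fin (2 * k + 2) → V,
      (∑ σ : Equiv.Perm (Fin (2 * k + 2)),
        ((Equiv.Perm.sign σ : ℤ) : ℝ) *
          ∏ i : Fin (k + 1),
            ω (v (σ ⟨2 * i.1, by have := i.2; omega⟩))
              (v (σ ⟨2 * i.1 + 1, by have := i.2; omega⟩)))
      = Stmt11.A ω k v := fun v => (Stmt11.A_apply ω k v).symm
  constructor
  · intro hco v hv
    rw [hbridge v]
    apply Stmt11.A_eq_zero_of_small ω halt k C _ v hv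
    have hle : LinearMap.BilinForm.orthogonal ω C ≤ C := by
      intro x hx
      apply hco
      intro c hc
      rw [hskew x c]
      rw [hx c hc]
      ring
    rw [inf_eq_right.mpr hle, horthrank, hC]
    omega
  · intro hS v hv
    by_contra hvC
    have hvo : v ∈ LinearMap.BilinForm.orthogonal ω C := by
      intro c hc
      show ω c v = 0
      rw [hskew c v, hv c hc, neg_zero]
    have hRlt : (C ⊓ LinearMap.BilinForm.orthogonal ω C : Submodule ℝ V)
        < LinearMap.BilinForm.orthogonal ω C := by
      refine lt_of_le_of_ne inf_le_right fun h => hvC ?_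
      exact (h ▸ inf_le_left : LinearMap.BilinForm.orthogonal ω C ≤ C) hvo
    have hlt := Submodule.finrank_lt_finrank_of_lt hRlt
    rw [horthrank] at hlt
    have hext : 2 * (k + 1) +
        finrank ℝ (C ⊓ LinearMap.BilinForm.orthogonal ω C : Submodule ℝ V)
        ≤ finrank ℝ C + 1 := by
      rw [hC]; omega
    obtain ⟨e, f, heC, hfC, hee, hff, hef⟩ := Stmt11.extract ω halt (k + 1) C hext
    set w : Fin (2 * k + 2) → V := fun x =>
      if x.1 % 2 = 0 then e ⟨x.1 / 2, by have := x.2; omega⟩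
      else f ⟨x.1 / 2, by have := x.2; omega⟩ with hw
    have hwC : ∀ i, w i ∈ C := by
      intro i
      rw [hw]
      dsimp only
      split
      · exact heC _
      · exact hfC _
    have hfe : ∀ i j, ω (f i) (e j) = if i = j then (-1 : ℝ) else 0 := by
      intro i j
      rw [hskew, hef j i]
      by_cases h : i = j
      · subst h; simp
      · rw [if_neg h, if_neg (fun hh => h hh.symm), neg_zero]
    have hM : ∀ a b : Fin (2 * k + 2), ω (w a) (w b) =
        if a.1 / 2 = b.1 / 2 then
          (if a.1 % 2 = 0 ∧ b.1 % 2 = 1 then (1 : ℝ)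
            else if a.1 % 2 = 1 ∧ b.1 % 2 = 0 then -1 else 0)
        else 0 := by
      intro a b
      have ha2 : a.1 % 2 = 0 ∨ a.1 % 2 = 1 := by omega
      have hb2 : b.1 % 2 = 0 ∨ b.1 % 2 = 1 := by omega
      have hdiv : ∀ (x y : ℕ) (hx : x < k+1) (hy : y < k+1),
          ((⟨x, hx⟩ : Fin (k+1)) = ⟨y, hy⟩) ↔ x = y := by
        intro x y hx hy
        rw [Fin.mk.injEq]
      rcases ha2 with ha | ha <;> rcases hb2 with hb | hb
      · rw [hw]
        dsimp only
        rw [if_pos ha, if_pos hb, hee,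
          if_neg (show ¬(a.1 % 2 = 0 ∧ b.1 % 2 = 1) by omega),
          if_neg (show ¬(a.1 % 2 = 1 ∧ b.1 % 2 = 0) by omega), ite_self]
      · rw [hw]
        dsimp only
        rw [if_pos ha, if_neg (show ¬(b.1 % 2 = 0) by omega), hef,
          if_pos (show a.1 % 2 = 0 ∧ b.1 % 2 = 1 from ⟨ha, hb⟩)]
        simp only [Fin.mk.injEq]
      · rw [hw]
        dsimp only
        rw [if_neg (show ¬(a.1 % 2 = 0) by omega), if_pos hb, hfe,
          if_neg (show ¬(a.1 % 2 = 0 ∧ b.1 % 2 = 1) by omega),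
          if_pos (show a.1 % 2 = 1 ∧ b.1 % 2 = 0 from ⟨ha, hb⟩)]
        simp only [Fin.mk.injEq]
      · rw [hw]
        dsimp only
        rw [if_neg (show ¬(a.1 % 2 = 0) by omega),
          if_neg (show ¬(b.1 % 2 = 0) by omega), hff,
          if_neg (show ¬(a.1 % 2 = 0 ∧ b.1 % 2 = 1) by omega),
          if_neg (show ¬(a.1 % 2 = 1 ∧ b.1 % 2 = 0) by omega), ite_self]
    have hpos := Stmt11.A_pos ω k w hM
    have hzero := hS w hwC
    rw [hbridge w] at hzero
    rw [hzero] at hpos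
    exact lt_irrefl 0 hpos
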